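/- arXiv:2407.05260 — 4 statements merged into one kernel-verified Lean document; each statement's English description precedes it below -/
import Mathlib

section
/- For every ε ∈ (0,1) and every v > 0 and w > 0, there exists r > √v·Φ⁻¹(ε) such that 𝒦(r/√v, w) ≤ ε, where 𝒦(r,V) is the infimum of E[Φ(Π)] over all real random variables Π supported on at most 3 points with E[Π] = r and Var(Π) ≤ V. (This is the content of Theorem 2 after applying the known characterizations r_mv(ε,Γ,V) = max{r : 𝒦(r/√V(Γ), C′(Γ)²V/V(Γ)) ≤ ε} and r_as(ε,Γ) = √V(Γ)·Φ⁻¹(ε).) -/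
noncomputable section

open MeasureTheory Real Set

/-- The standard normal CDF. -/
def stdNormalCDF (x : ℝ) : ℝ :=
  ∫ t in Set.Iic x, Real.exp (-t ^ 2 / 2) / Real.sqrt (2 * Real.pi)

def gd (t : ℝ) : ℝ := Real.exp (-t ^ 2 / 2) / Real.sqrt (2 * Real.pi)

lemma gd_pos (t : ℝ) : 0 < gd t := by
  apply div_pos (Real.exp_pos _)
  positivity

lemma gd_integrable : Integrable gd := by
  have h : Integrable (fun t : ℝ => Real.exp (-(1/2 : ℝ) * t ^ 2)) :=
    integrable_exp_neg_mul_sq (by norm_num)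
  have := h.div_const (Real.sqrt (2 * Real.pi))
  convert this using 2 with t
  · unfold gd; ring_nf
  
lemma gd_integral : ∫ t, gd t = 1 := by
  unfold gd
  rw [integral_div]
  have h : (fun t : ℝ => Real.exp (-t ^ 2 / 2)) = fun t : ℝ => Real.exp (-(1/2 : ℝ) * t ^ 2) := by
    funext t; ring_nf
  rw [h, integral_gaussian]
  rw [div_eq_one_iff_eq (by positivity)]
  norm_num
  ring

lemma cdf_eq (x : ℝ) : stdNormalCDF x = ∫ t in Set.Iic x, gd t := rfl

lemma cdf_nonneg (x : ℝ) : 0 ≤ stdNormalCDF x := by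
  rw [cdf_eq]
  apply setIntegral_nonneg measurableSet_Iic
  intro t _; exact (gd_pos t).le

lemma cdf_le_one (x : ℝ) : stdNormalCDF x ≤ 1 := by
  rw [cdf_eq, ← gd_integral]
  exact setIntegral_le_integral gd_integrable (ae_of_all _ fun t => (gd_pos t).le)

lemma cdf_sub {x y : ℝ} (hxy : x ≤ y) :
    stdNormalCDF y - stdNormalCDF x = ∫ t in Set.Ioc x y, gd t := by
  rw [cdf_eq, cdf_eq, intervalIntegral.integral_Iic_sub_Iic gd_integrable.integrableOn gd_integrable.integrableOn,
    intervalIntegral.integral_of_le hxy]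

lemma cdf_gap {x y M : ℝ} (hxy : x ≤ y) (hx : |x| ≤ M) (hy : |y| ≤ M) :
    (y - x) * (Real.exp (-M ^ 2 / 2) / Real.sqrt (2 * Real.pi)) ≤
      stdNormalCDF y - stdNormalCDF x := by
  rw [cdf_sub hxy]
  set c := Real.exp (-M ^ 2 / 2) / Real.sqrt (2 * Real.pi) with hc
  have h1 : ∫ _ in Set.Ioc x y, c = (y - x) * c := by
    rw [setIntegral_const, Real.volume_real_Ioc_of_le hxy, smul_eq_mul]
  rw [← h1]
  apply setIntegral_mono_on
  · exact integrableOn_const (by rw [Real.volume_Ioc]; exact ENNReal.ofReal_ne_top)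
  · exact gd_integrable.integrableOn
  · exact measurableSet_Ioc
  · intro t ht
    have habs : |t| ≤ M := by
      rw [abs_le] at hx hy ⊢
      exact ⟨le_trans hx.1 ht.1.le, le_trans ht.2 hy.2⟩
    have ht2 : t ^ 2 ≤ M ^ 2 := sq_le_sq' (by rw [abs_le] at habs; linarith [habs.1]) (le_trans (le_abs_self t) habs)
    unfold gd
    apply div_le_div_of_nonneg_right ?_ (by positivity)
    exact Real.exp_le_exp.2 (by linarith)

lemma cdf_strictMono : StrictMono stdNormalCDF := by
  intro x y hxy
  have h := cdf_gap hxy.le (le_max_left |x| |y|) (le_max_right |x| |y|)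
  have hc : 0 < Real.exp (-(max |x| |y|) ^ 2 / 2) / Real.sqrt (2 * Real.pi) := by positivity
  nlinarith

/-- `𝒦(r,V)`: the infimum of `E[Φ(Π)]` over real random variables `Π` supported on at most
three points (represented by their weights `p` and atoms `x`) with `E[Π] = r` and
`Var(Π) = E[Π²] − r² ≤ V`. -/
def Kfun (r V : ℝ) : ℝ :=
  sInf {e : ℝ | ∃ p x : Fin 3 → ℝ,
    (∀ i, 0 ≤ p i) ∧ (∑ i, p i = 1) ∧
    (∑ i, p i * x i = r) ∧ (∑ i, p i * x i ^ 2 - r ^ 2 ≤ V) ∧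
    e = ∑ i, p i * stdNormalCDF (x i)}

set_option maxHeartbeats 1000000 in
/-- For every `ε ∈ (0,1)`, `v > 0` and `w > 0` there exists `r > √v·Φ⁻¹(ε)` with
`𝒦(r/√v, w) ≤ ε`. -/
theorem stmt_1 (Φinv : ℝ → ℝ)
    (hΦinv : ∀ y ∈ Set.Ioo (0 : ℝ) 1, stdNormalCDF (Φinv y) = y)
    (ε v w : ℝ) (hε : ε ∈ Set.Ioo (0 : ℝ) 1) (hv : 0 < v) (hw : 0 < w) :
    ∃ r : ℝ, Real.sqrt v * Φinv ε < r ∧ Kfun (r / Real.sqrt v) w ≤ ε := by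
  obtain ⟨hε0, hε1⟩ := hε
  set L := Φinv (ε/2) with hLdef
  set U := Φinv ε with hUdef
  have hL : stdNormalCDF L = ε/2 := hΦinv _ ⟨by linarith, by linarith⟩
  have hU : stdNormalCDF U = ε := hΦinv _ ⟨hε0, hε1⟩
  set U' := U + Real.sqrt w with hU'def
  set M := max |L| |U'| with hMdef
  set c := Real.exp (-M ^ 2 / 2) / Real.sqrt (2 * Real.pi) with hcdef
  have hcpos : 0 < c := by positivity
  set δ := min (min (ε/2) (1/2)) (c^2*w/8) with hδdef
  have hδpos : 0 < δ := by
    apply lt_min (lt_min (by linarith) (by norm_num))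
    positivity
  have hδε : δ ≤ ε/2 := le_trans (min_le_left _ _) (min_le_left _ _)
  have hδhalf : δ ≤ 1/2 := le_trans (min_le_left _ _) (min_le_right _ _)
  have hδc : δ ≤ c^2*w/8 := min_le_right _ _
  have h1δ : (0:ℝ) < 1 - δ := by linarith
  set ε' := (ε - δ)/(1 - δ) with hε'def
  have hε'pos : 0 < ε' := div_pos (by linarith) h1δ
  have hε'lt : ε' < 1 := by rw [div_lt_one h1δ]; linarith
  set a := Φinv ε' with hadef
  have ha : stdNormalCDF a = ε' := hΦinv _ ⟨hε'pos, hε'lt⟩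
  have hε'ge : ε/2 ≤ ε' := by
    rw [le_div_iff₀ h1δ]
    have := mul_nonneg hε0.le hδpos.le
    linarith [this]
  have hε'le : ε' ≤ ε := by
    rw [div_le_iff₀ h1δ]
    have := mul_le_mul_of_nonneg_right hε1.le hδpos.le
    linarith [this]
  have hε'ge2 : ε - 2*δ ≤ ε' := by
    rw [le_div_iff₀ h1δ]
    have h1 := mul_nonneg hε0.le hδpos.le
    have h2 : 2*δ*δ ≤ 1*δ := mul_le_mul_of_nonneg_right (by linarith) hδpos.le
    linarith [h1, h2]
  set s := Real.sqrt (w*δ) with hsdef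
  have hs2 : s^2 = w*δ := Real.sq_sqrt (by positivity)
  have hspos : 0 < s := Real.sqrt_pos.2 (by positivity)
  set b := a + s/δ with hbdef
  set m := a + s with hmdef
  -- a between L and U
  have haL : L ≤ a := by
    rw [← cdf_strictMono.le_iff_le, hL, ha]; exact hε'ge
  have haU : a ≤ U := by
    rw [← cdf_strictMono.le_iff_le, ha, hU]; exact hε'le
  have hsw : s ≤ Real.sqrt w := by
    rw [hsdef, show w = w*1 by ring]
    exact Real.sqrt_le_sqrt (by nlinarith)
  have hmU' : m ≤ U' := by rw [hmdef, hU'def]; linarith [hsw, haU]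
  have haM : |a| ≤ M := by
    rw [abs_le]
    constructor
    · calc -M ≤ -|L| := by simp [hMdef]
        _ ≤ L := neg_abs_le L
        _ ≤ a := haL
    · calc a ≤ U' := by linarith [hspos.le, hmU']
        _ ≤ |U'| := le_abs_self _
        _ ≤ M := le_max_right _ _
  have hmM : |m| ≤ M := by
    rw [abs_le]
    constructor
    · calc -M ≤ -|L| := by simp [hMdef]
        _ ≤ L := neg_abs_le L
        _ ≤ m := by rw [hmdef]; linarith [hspos.le]
    · calc m ≤ U' := hmU'
        _ ≤ |U'| := le_abs_self _
        _ ≤ M := le_max_right _ _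
  have hgap : (m - a) * c ≤ stdNormalCDF m - stdNormalCDF a := cdf_gap (by rw [hmdef]; linarith) haM hmM
  have hma : m - a = s := by rw [hmdef]; ring
  rw [hma] at hgap
  -- key : s*c > 2δ
  have hkey : 2*δ < s*c := by
    have hsc : (s*c)^2 = c^2*w*δ := by rw [mul_pow, hs2]; ring
    have h8 : δ*δ ≤ δ*(c^2*w/8) := mul_le_mul_of_nonneg_left hδc hδpos.le
    have hδδ : 0 < δ*δ := mul_pos hδpos hδpos
    have h1 : (2*δ)^2 < (s*c)^2 := by rw [hsc]; linarith [h8, hδδ]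
    exact lt_of_pow_lt_pow_left₀ 2 (mul_pos hspos hcpos).le h1
  have hΦm : ε < stdNormalCDF m := by
    have := ha ▸ hgap
    linarith
  have hUm : U < m := cdf_strictMono.lt_iff_lt.1 (by rw [hU]; exact hΦm)
  have hsv : 0 < Real.sqrt v := Real.sqrt_pos.2 hv
  refine ⟨Real.sqrt v * m, by exact mul_lt_mul_of_pos_left hUm hsv, ?_⟩
  have hrm : Real.sqrt v * m / Real.sqrt v = m := by field_simp
  rw [hrm]
  -- the two-point candidate
  have hmem : ((1-δ) * stdNormalCDF a + (δ * stdNormalCDF b + 0 * stdNormalCDF 0)) ∈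
      {e : ℝ | ∃ p x : Fin 3 → ℝ,
        (∀ i, 0 ≤ p i) ∧ (∑ i, p i = 1) ∧
        (∑ i, p i * x i = m) ∧ (∑ i, p i * x i ^ 2 - m ^ 2 ≤ w) ∧
        e = ∑ i, p i * stdNormalCDF (x i)} := by
    refine ⟨![1-δ, δ, 0], ![a, b, 0], ?_, ?_, ?_, ?_, ?_⟩
    · intro i; fin_cases i <;> simp <;> linarith
    · simp [Fin.sum_univ_three]
    · simp only [Fin.sum_univ_three, Matrix.cons_val_zero, Matrix.cons_val_one, Matrix.head_cons,
        Matrix.cons_val_two, Matrix.tail_cons]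
      rw [hbdef, hmdef]
      field_simp
      ring
    · simp only [Fin.sum_univ_three, Matrix.cons_val_zero, Matrix.cons_val_one, Matrix.head_cons,
        Matrix.cons_val_two, Matrix.tail_cons]
      rw [hbdef, hmdef]
      have hδne : δ ≠ 0 := ne_of_gt hδpos
      have hexp : (1-δ) * a^2 + δ * (a + s/δ)^2 + 0 * 0^2 - (a+s)^2 = s^2/δ - s^2 := by
        field_simp
        ring
      rw [hexp, hs2, mul_comm w δ, mul_div_cancel_left₀ _ hδne]
      have := mul_nonneg hδpos.le hw.le
      linarith
    · simp [Fin.sum_univ_three]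
  have hbdd : BddBelow {e : ℝ | ∃ p x : Fin 3 → ℝ,
        (∀ i, 0 ≤ p i) ∧ (∑ i, p i = 1) ∧
        (∑ i, p i * x i = m) ∧ (∑ i, p i * x i ^ 2 - m ^ 2 ≤ w) ∧
        e = ∑ i, p i * stdNormalCDF (x i)} := by
    refine ⟨0, ?_⟩
    rintro e ⟨p, x, hp, -, -, -, rfl⟩
    exact Finset.sum_nonneg fun i _ => mul_nonneg (hp i) (cdf_nonneg _)
  have hle : Kfun m w ≤ (1-δ) * stdNormalCDF a + (δ * stdNormalCDF b + 0 * stdNormalCDF 0) :=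
    csInf_le hbdd hmem
  have hval : (1-δ) * stdNormalCDF a + (δ * stdNormalCDF b + 0 * stdNormalCDF 0) ≤ ε := by
    rw [ha]
    have h1 : (1-δ) * ε' = ε - δ := by
      rw [hε'def, mul_comm, div_mul_cancel₀ _ (ne_of_gt h1δ)]
    have h2 : stdNormalCDF b ≤ 1 := cdf_le_one b
    have h3 : δ * stdNormalCDF b ≤ δ * 1 := mul_le_mul_of_nonneg_left h2 hδpos.le
    linarith
  linarith
end
end

section
/- Let Γ₀ < Γ < Γ*, let P* be any maximizer achieving C(Γ) (i.e., P* is a probability vector on 𝒜 with c(P*) ≤ Γ and I(P*,W) = C(Γ)), and set Q* := P*W; assume Q*(b) > 0 for all b ∈ ℬ. Assume the capacity-cost function C is differentiable at Γ with derivative λ = C′(Γ). Then for every a ∈ 𝒜: Σ_{b∈ℬ} W(b|a)·log(W(b|a)/Q*(b)) ≤ C(Γ) − λ·(Γ − c(a)), where summands with W(b|a) = 0 read as 0. (Equivalently, E[i(X,Y)|X] ≤ C(Γ) − C′(Γ)(Γ − c(X)) almost surely for any input random variable X, where i(a,b) = log(W(b|a)/Q*(b)) and Y is the channel output for input X.)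 -/
open scoped BigOperators

noncomputable section
namespace Paper

variable {𝒜 ℬ : Type*} [Fintype 𝒜] [Fintype ℬ] [Nonempty 𝒜] [Nonempty ℬ]

/-- `W` is a channel from `𝒜` to `ℬ`. -/
def IsChannel (W : 𝒜 → ℬ → ℝ) : Prop :=
  (∀ a b, 0 ≤ W a b) ∧ ∀ a, ∑ b, W a b = 1

/-- `P` is a probability vector on `𝒜`. -/
def IsProbVec (P : 𝒜 → ℝ) : Prop := (∀ a, 0 ≤ P a) ∧ ∑ a, P a = 1

/-- Average cost `c(P) = Σ_a P(a)c(a)`. -/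
def avgCost (c : 𝒜 → ℝ) (P : 𝒜 → ℝ) : ℝ := ∑ a, P a * c a

/-- Output distribution `PW(b) = Σ_a P(a)W(b|a)`. -/
def outDist (W : 𝒜 → ℬ → ℝ) (P : 𝒜 → ℝ) (b : ℬ) : ℝ := ∑ a, P a * W a b

/-- Mutual information `I(P,W)`; summands with `P(a)W(b|a) = 0` vanish. -/
def mutInfo (W : 𝒜 → ℬ → ℝ) (P : 𝒜 → ℝ) : ℝ :=
  ∑ a, ∑ b, P a * W a b * Real.log (W a b / outDist W P b)

/-- The capacity-cost function `C(Γ)`. -/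
def capacityCost (W : 𝒜 → ℬ → ℝ) (c : 𝒜 → ℝ) (Γ : ℝ) : ℝ :=
  sSup {x : ℝ | ∃ P : 𝒜 → ℝ, IsProbVec P ∧ avgCost c P ≤ Γ ∧ mutInfo W P = x}

/-- The unconstrained capacity `max_P I(P,W)`. -/
def capacity (W : 𝒜 → ℬ → ℝ) : ℝ :=
  sSup {x : ℝ | ∃ P : 𝒜 → ℝ, IsProbVec P ∧ mutInfo W P = x}

/-- `Γ₀ = min_a c(a)`. -/
def Gamma0 (c : 𝒜 → ℝ) : ℝ := ⨅ a, c a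

/-- `Γ* = inf{Γ : C(Γ) = max_P I(P,W)}`. -/
def GammaStar (W : 𝒜 → ℬ → ℝ) (c : 𝒜 → ℝ) : ℝ :=
  sInf {Γ : ℝ | capacityCost W c Γ = capacity W}

/-- `Π*`: the set of capacity-cost-achieving input distributions at cost `Γ`. -/
def capAchievers (W : 𝒜 → ℬ → ℝ) (c : 𝒜 → ℝ) (Γ : ℝ) : Set (𝒜 → ℝ) :=
  {P | IsProbVec P ∧ avgCost c P ≤ Γ ∧ mutInfo W P = capacityCost W c Γ}

/-- `ν_a`: the conditional information variance of input letter `a` w.r.t. output law `Q`. -/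
def nu (W : 𝒜 → ℬ → ℝ) (Q : ℬ → ℝ) (a : 𝒜) : ℝ :=
  ∑ b, W a b * (Real.log (W a b / Q b)) ^ 2
    - (∑ b, W a b * Real.log (W a b / Q b)) ^ 2

/-- ℓ¹ distance between probability vectors. -/
def l1dist (P Q : 𝒜 → ℝ) : ℝ := ∑ a, |P a - Q a|

set_option linter.unusedSectionVars false in
lemma mutInfo_le_card (W : 𝒜 → ℬ → ℝ) (hW : IsChannel W) (P : 𝒜 → ℝ) (hP : IsProbVec P) :
    mutInfo W P ≤ (Fintype.card 𝒜 : ℝ) * (Fintype.card ℬ : ℝ) := by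
  obtain ⟨hW0, hW1⟩ := hW
  obtain ⟨hP0, hP1⟩ := hP
  have hterm : ∀ a b, P a * W a b * Real.log (W a b / outDist W P b) ≤ 1 := by
    intro a b
    rcases eq_or_lt_of_le (hP0 a) with h | hPa
    · simp [← h]
    rcases eq_or_lt_of_le (hW0 a b) with h | hWab
    · simp [← h]
    have hQle : P a * W a b ≤ outDist W P b :=
      Finset.single_le_sum (fun a' _ => mul_nonneg (hP0 a') (hW0 a' b)) (Finset.mem_univ a)
    have hQpos : 0 < outDist W P b := lt_of_lt_of_le (mul_pos hPa hWab) hQle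
    have hW1b : W a b ≤ 1 := by
      rw [← hW1 a]; exact Finset.single_le_sum (fun b' _ => hW0 a b') (Finset.mem_univ b)
    have hlog : Real.log (W a b / outDist W P b) ≤ Real.log (1 / P a) := by
      apply Real.log_le_log (div_pos hWab hQpos)
      rw [div_le_div_iff₀ hQpos hPa]
      nlinarith
    have hlog2 : Real.log (1 / P a) ≤ 1 / P a - 1 :=
      Real.log_le_sub_one_of_pos (by positivity)
    have h1 : P a * (1 / P a) = 1 := by field_simp
    nlinarith [mul_le_mul_of_nonneg_left (hlog.trans hlog2)
      (mul_nonneg (hP0 a) (hW0 a b))]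
  calc mutInfo W P ≤ ∑ _a : 𝒜, ∑ _b : ℬ, (1:ℝ) :=
        Finset.sum_le_sum fun a _ => Finset.sum_le_sum fun b _ => hterm a b
    _ = (Fintype.card 𝒜 : ℝ) * (Fintype.card ℬ : ℝ) := by
        simp [Finset.card_univ, mul_comm]

lemma mutInfo_le_capacityCost (W : 𝒜 → ℬ → ℝ) (hW : IsChannel W) (c : 𝒜 → ℝ) (Γ : ℝ)
    (P : 𝒜 → ℝ) (hP : IsProbVec P) (hcost : avgCost c P ≤ Γ) :
    mutInfo W P ≤ capacityCost W c Γ := by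
  apply le_csSup
  · refine ⟨(Fintype.card 𝒜 : ℝ) * (Fintype.card ℬ : ℝ), ?_⟩
    rintro x ⟨P', hP', _, rfl⟩
    exact mutInfo_le_card W hW P' hP'
  · exact ⟨P, hP, hcost, rfl⟩


/-- Lemma 2 of the paper: if `C` is differentiable at `Γ` with derivative `λ`, then for every
input letter `a`, `Σ_b W(b|a)·log(W(b|a)/Q*(b)) ≤ C(Γ) − λ·(Γ − c(a))`. -/
theorem stmt_7 (W : 𝒜 → ℬ → ℝ) (hW : IsChannel W) (c : 𝒜 → ℝ) (cmax : ℝ)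
    (hc : ∀ a, 0 ≤ c a ∧ c a ≤ cmax)
    (Γ : ℝ) (hΓ₁ : Gamma0 c < Γ) (hΓ₂ : Γ < GammaStar W c)
    (Pstar : 𝒜 → ℝ) (hPstar : Pstar ∈ capAchievers W c Γ)
    (hQ : ∀ b, 0 < outDist W Pstar b)
    (lam : ℝ) (hderiv : HasDerivAt (capacityCost W c) lam Γ) :
    ∀ a, ∑ b, W a b * Real.log (W a b / outDist W Pstar b)
      ≤ capacityCost W c Γ - lam * (Γ - c a) := by
  classical
  intro a
  obtain ⟨hPv, hPc, hPI⟩ := hPstar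
  obtain ⟨hW0, hW1⟩ := hW
  obtain ⟨hP0, hP1⟩ := hPv
  set Q : ℬ → ℝ := outDist W Pstar with hQdef
  set d : 𝒜 → ℝ := fun a' => (if a' = a then (1:ℝ) else 0) - Pstar a' with hd
  set F : ℝ → ℝ := fun ε => ∑ a', ∑ b,
    (Pstar a' + ε * d a') * (W a' b * (Real.log (W a' b) - Real.log (Q b + ε * (W a b - Q b))))
    with hF
  set g : ℝ → ℝ := fun ε => capacityCost W c (Γ + ε * (c a - Γ)) with hg
  set L : ℝ := ∑ a', ∑ b,
    (d a' * (W a' b * (Real.log (W a' b) - Real.log (Q b)))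
      - Pstar a' * (W a' b * ((W a b - Q b) / Q b))) with hL
  -- basic facts
  have hdW : ∀ b, ∑ a', d a' * W a' b = W a b - Q b := by
    intro b
    simp only [hd, sub_mul, ite_mul, one_mul, zero_mul]
    rw [Finset.sum_sub_distrib, Finset.sum_ite_eq' Finset.univ a]
    simp [hQdef, outDist]
  have hPe_out : ∀ (ε : ℝ) (b : ℬ),
      outDist W (fun a' => Pstar a' + ε * d a') b = Q b + ε * (W a b - Q b) := by
    intro ε b
    have : ∑ a', (Pstar a' + ε * d a') * W a' b
        = (∑ a', Pstar a' * W a' b) + ε * ∑ a', d a' * W a' b := by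
      rw [Finset.mul_sum, ← Finset.sum_add_distrib]
      exact Finset.sum_congr rfl fun a' _ => by ring
    simpa [outDist, hQdef, hdW b] using this
  have hQsum : ∑ b, Q b = 1 := by
    rw [hQdef]
    simp only [outDist]
    rw [Finset.sum_comm]
    calc ∑ a', ∑ b, Pstar a' * W a' b = ∑ a', Pstar a' := by
          exact Finset.sum_congr rfl fun a' _ => by rw [← Finset.mul_sum, hW1 a', mul_one]
      _ = 1 := hP1
  -- derivative of F
  have hterm : ∀ a' b, HasDerivAt (fun ε : ℝ =>
      (Pstar a' + ε * d a') * (W a' b * (Real.log (W a' b) - Real.log (Q b + ε * (W a b - Q b)))))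
      (d a' * (W a' b * (Real.log (W a' b) - Real.log (Q b)))
        - Pstar a' * (W a' b * ((W a b - Q b) / Q b))) 0 := by
    intro a' b
    have hu : HasDerivAt (fun ε : ℝ => Pstar a' + ε * d a') (d a') 0 := by
      simpa using ((hasDerivAt_id (0:ℝ)).mul_const (d a')).const_add (Pstar a')
    have hlin : HasDerivAt (fun ε : ℝ => Q b + ε * (W a b - Q b)) (W a b - Q b) 0 := by
      simpa using ((hasDerivAt_id (0:ℝ)).mul_const (W a b - Q b)).const_add (Q b)
    have hlogg : HasDerivAt Real.log (Q b)⁻¹ ((fun ε : ℝ => Q b + ε * (W a b - Q b)) 0) := by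
      simpa using Real.hasDerivAt_log (hQ b).ne'
    have hlog : HasDerivAt (fun ε : ℝ => Real.log (Q b + ε * (W a b - Q b)))
        ((Q b)⁻¹ * (W a b - Q b)) 0 := hlogg.comp (h := fun ε : ℝ => Q b + ε * (W a b - Q b)) 0 hlin
    have hv : HasDerivAt (fun ε : ℝ =>
        W a' b * (Real.log (W a' b) - Real.log (Q b + ε * (W a b - Q b))))
        (W a' b * (0 - (Q b)⁻¹ * (W a b - Q b))) 0 :=
      (((hasDerivAt_const (0:ℝ) (Real.log (W a' b))).sub hlog)).const_mul (W a' b)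
    have := hu.fun_mul hv
    convert this using 1
    · rfl
    · rfl
    simp only [zero_mul, add_zero, mul_zero]
    field_simp
    ring
  have hFderiv : HasDerivAt F L 0 := by
    rw [hF, hL]
    exact HasDerivAt.fun_sum fun a' _ => HasDerivAt.fun_sum fun b _ => hterm a' b
  -- value of L
  have hSa : ∀ a'', ∑ b, W a'' b * (Real.log (W a'' b) - Real.log (Q b))
      = ∑ b, W a'' b * Real.log (W a'' b / Q b) := by
    intro a''
    refine Finset.sum_congr rfl fun b _ => ?_
    rcases eq_or_lt_of_le (hW0 a'' b) with h | h
    · simp [← h]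
    · rw [Real.log_div h.ne' (hQ b).ne']
  have hA : (∑ a', ∑ b, d a' * (W a' b * (Real.log (W a' b) - Real.log (Q b))))
      = (∑ b, W a b * Real.log (W a b / Q b)) - mutInfo W Pstar := by
    have e1 : ∀ a', ∑ b, d a' * (W a' b * (Real.log (W a' b) - Real.log (Q b)))
        = d a' * ∑ b, W a' b * Real.log (W a' b / Q b) := by
      intro a'; rw [← hSa a', Finset.mul_sum]
    rw [Finset.sum_congr rfl fun a' _ => e1 a']
    have e2 : mutInfo W Pstar = ∑ a', Pstar a' * ∑ b, W a' b * Real.log (W a' b / Q b) := by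
      simp only [mutInfo, ← hQdef, Finset.mul_sum, mul_assoc]
    simp only [hd, sub_mul, ite_mul, one_mul, zero_mul]
    rw [Finset.sum_sub_distrib, Finset.sum_ite_eq' Finset.univ a]
    simp [e2]
  have hB : (∑ a', ∑ b, Pstar a' * (W a' b * ((W a b - Q b) / Q b))) = 0 := by
    rw [Finset.sum_comm]
    have e3 : ∀ b, ∑ a', Pstar a' * (W a' b * ((W a b - Q b) / Q b)) = W a b - Q b := by
      intro b
      have e4 : ∑ a', Pstar a' * W a' b = Q b := by rw [hQdef]; rfl
      calc ∑ a', Pstar a' * (W a' b * ((W a b - Q b) / Q b))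
          = (∑ a', Pstar a' * W a' b) * ((W a b - Q b) / Q b) := by
            rw [Finset.sum_mul]; exact Finset.sum_congr rfl fun a' _ => by ring
        _ = Q b * ((W a b - Q b) / Q b) := by rw [e4]
        _ = W a b - Q b := by rw [mul_comm, div_mul_cancel₀ _ (hQ b).ne']
    rw [Finset.sum_congr rfl fun b _ => e3 b, Finset.sum_sub_distrib, hW1 a, hQsum]
    ring
  have hLval : L = (∑ b, W a b * Real.log (W a b / Q b)) - capacityCost W c Γ := by
    rw [hL]
    have : (∑ a', ∑ b,
        (d a' * (W a' b * (Real.log (W a' b) - Real.log (Q b)))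
          - Pstar a' * (W a' b * ((W a b - Q b) / Q b))))
        = (∑ a', ∑ b, d a' * (W a' b * (Real.log (W a' b) - Real.log (Q b))))
          - ∑ a', ∑ b, Pstar a' * (W a' b * ((W a b - Q b) / Q b)) := by
      rw [← Finset.sum_sub_distrib]
      exact Finset.sum_congr rfl fun a' _ => Finset.sum_sub_distrib _ _
    rw [this, hA, hB, hPI]
    ring
  -- F agrees with mutual information where output dist positive
  have hFeq : ∀ ε : ℝ, (∀ b, 0 < Q b + ε * (W a b - Q b)) →
      F ε = mutInfo W (fun a' => Pstar a' + ε * d a') := by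
    intro ε hpos
    rw [hF]
    simp only [mutInfo]
    refine Finset.sum_congr rfl fun a' _ => Finset.sum_congr rfl fun b _ => ?_
    rw [hPe_out ε b]
    rcases eq_or_lt_of_le (hW0 a' b) with h | h
    · simp [← h]
    · rw [Real.log_div h.ne' (hpos b).ne']; ring
  -- Pe is a prob vec with the right cost
  have hPle1 : ∀ a', Pstar a' ≤ 1 := by
    intro a'; rw [← hP1]
    exact Finset.single_le_sum (fun i _ => hP0 i) (Finset.mem_univ a')
  have hPeProb : ∀ ε : ℝ, 0 ≤ ε → ε ≤ 1 → IsProbVec (fun a' => Pstar a' + ε * d a') := by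
    intro ε h0 h1
    constructor
    · intro a'
      simp only [hd]
      by_cases h : a' = a
      · subst h; rw [if_pos rfl]; nlinarith [hP0 a', hPle1 a']
      · rw [if_neg h]; nlinarith [hP0 a']
    · have hds : ∑ a', d a' = 0 := by
        simp only [hd]
        rw [Finset.sum_sub_distrib, Finset.sum_ite_eq' Finset.univ a]
        simp [hP1]
      rw [Finset.sum_add_distrib, hP1, ← Finset.mul_sum, hds]
      ring
  have hPeCost : ∀ ε : ℝ, 0 ≤ ε → ε ≤ 1 →
      avgCost c (fun a' => Pstar a' + ε * d a') ≤ Γ + ε * (c a - Γ) := by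
    intro ε h0 h1
    have hdc : ∑ a', d a' * c a' = c a - ∑ a', Pstar a' * c a' := by
      simp only [hd, sub_mul, ite_mul, one_mul, zero_mul]
      rw [Finset.sum_sub_distrib, Finset.sum_ite_eq' Finset.univ a]
      simp
    have hPc' : ∑ a', Pstar a' * c a' ≤ Γ := hPc
    have e5 : (∑ a', (Pstar a' + ε * d a') * c a')
        = (∑ a', Pstar a' * c a') + ε * ∑ a', d a' * c a' := by
      rw [Finset.mul_sum, ← Finset.sum_add_distrib]
      exact Finset.sum_congr rfl fun a' _ => by ring
    show (∑ a', (Pstar a' + ε * d a') * c a') ≤ Γ + ε * (c a - Γ)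
    rw [e5, hdc]; nlinarith
  -- F ≤ g eventually on the right
  have hev1 : ∀ᶠ ε in nhds (0:ℝ), ∀ b, 0 < Q b + ε * (W a b - Q b) := by
    rw [Filter.eventually_all]
    intro b
    have hc1 : Filter.Tendsto (fun ε : ℝ => Q b + ε * (W a b - Q b)) (nhds 0) (nhds (Q b)) := by
      have : Continuous (fun ε : ℝ => Q b + ε * (W a b - Q b)) := by continuity
      simpa using this.tendsto 0
    exact hc1.eventually (eventually_gt_nhds (hQ b))
  have hmem : Set.Ioc (0:ℝ) 1 ∈ nhdsWithin (0:ℝ) (Set.Ioi 0) :=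
    Ioc_mem_nhdsGT_of_mem (by constructor <;> norm_num)
  have hev2 : ∀ᶠ ε in nhdsWithin (0:ℝ) (Set.Ioi 0), F ε ≤ g ε := by
    filter_upwards [hev1.filter_mono nhdsWithin_le_nhds,
      Filter.eventually_of_mem hmem fun ε hε => hε] with ε hpos hε
    rw [hFeq ε hpos, hg]
    exact mutInfo_le_capacityCost W ⟨hW0, hW1⟩ c _ _ (hPeProb ε hε.1.le hε.2)
      (hPeCost ε hε.1.le hε.2)
  -- values at 0
  have hF0 : F 0 = capacityCost W c Γ := by
    rw [hFeq 0 (by intro b; simpa using hQ b), ← hPI]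
    congr 1
    funext a'
    ring
  have hg0 : g 0 = capacityCost W c Γ := by rw [hg]; norm_num
  -- derivative of g
  have hgderiv : HasDerivAt g (lam * (c a - Γ)) 0 := by
    have hlin : HasDerivAt (fun ε : ℝ => Γ + ε * (c a - Γ)) (c a - Γ) 0 := by
      simpa using ((hasDerivAt_id (0:ℝ)).mul_const (c a - Γ)).const_add Γ
    have hderiv2 : HasDerivAt (capacityCost W c) lam ((fun ε : ℝ => Γ + ε * (c a - Γ)) 0) := by
      simpa using hderiv
    have := hderiv2.comp 0 hlin
    rw [hg]
    exact this
  -- slope argument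
  have key : 0 ≤ lam * (c a - Γ) - L := by
    have hdh : HasDerivWithinAt (fun ε => g ε - F ε) (lam * (c a - Γ) - L) (Set.Ioi 0) 0 :=
      (hgderiv.sub hFderiv).hasDerivWithinAt
    rw [hasDerivWithinAt_iff_tendsto_slope] at hdh
    have hIoi : Set.Ioi (0:ℝ) \ {0} = Set.Ioi 0 :=
      Set.diff_singleton_eq_self (by simp)
    rw [hIoi] at hdh
    refine ge_of_tendsto hdh ?_
    filter_upwards [hev2, self_mem_nhdsWithin] with ε hle hε
    have hε0 : (0:ℝ) < ε := hε
    have : slope (fun ε => g ε - F ε) 0 ε = (g ε - F ε - (g 0 - F 0)) / (ε - 0) := by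
      rw [slope_def_field]
    rw [this, hF0, hg0]
    apply div_nonneg <;> linarith
  rw [hLval] at key
  linarith


end Paper
end
end

section
/- Fix n ≥ 1, ρ > 0, ε ∈ (0,1) and Γ with Γ₀ < Γ < Γ*. Define δ := 1 − ε − sup_F inf_{q} (F∘W)( { (xⁿ,yⁿ) : Π_{k=1}^n W(y_k|x_k) > ρ·q(yⁿ) } ), where the supremum is over all controllers F that place full mass on inputs of average cost at most Γ, i.e. (F∘W)({(xⁿ,yⁿ) : (1/n)Σ_k c(x_k) ≤ Γ}) = 1, and the infimum is over all probability vectors q on ℬⁿ. If δ > 0, then log M*_fb(n,ε,Γ) ≤ log ρ − log δ. -/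
open scoped BigOperators

noncomputable section
namespace Paper

variable {𝒜 ℬ : Type*} [Fintype 𝒜] [Fintype ℬ] [Nonempty 𝒜] [Nonempty ℬ]

/-- The standard normal CDF. -/
def stdNormalCDF (x : ℝ) : ℝ :=
  ∫ t in Set.Iic x, Real.exp (-t ^ 2 / 2) / Real.sqrt (2 * Real.pi)

section Feedback

variable [DecidableEq 𝒜] [DecidableEq ℬ]

/-- Causality of a feedback encoder for one message: the input at time `k` depends only on
the first `k−1` channel outputs. -/
def CausalEnc {n : ℕ} (f : (Fin n → ℬ) → Fin n → 𝒜) : Prop :=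
  ∀ y y' : Fin n → ℬ, ∀ k : Fin n, (∀ i : Fin n, i < k → y i = y' i) → f y k = f y' k

/-- The output law `P_m(yⁿ) = Π_k W(y_k | f_k(m, y^{k−1}))` induced by a feedback encoder. -/
def outLaw (W : 𝒜 → ℬ → ℝ) {n M : ℕ} (f : Fin M → (Fin n → ℬ) → Fin n → 𝒜)
    (m : Fin M) (y : Fin n → ℬ) : ℝ :=
  ∏ k, W (f m y k) (y k)

/-- Average error probability of a deterministic feedback code. -/
def errProbFB (W : 𝒜 → ℬ → ℝ) {n M : ℕ} (f : Fin M → (Fin n → ℬ) → Fin n → 𝒜)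
    (g : (Fin n → ℬ) → Fin M) : ℝ :=
  (M : ℝ)⁻¹ * ∑ m : Fin M, ∑ y : Fin n → ℬ, if g y = m then 0 else outLaw W f m y

/-- Almost-sure cost constraint for a feedback code: on every output sequence of positive
probability the transmitted sequence has average cost at most `Γ`. -/
def ASCostFB (W : 𝒜 → ℬ → ℝ) (c : 𝒜 → ℝ) (Γ : ℝ) {n M : ℕ}
    (f : Fin M → (Fin n → ℬ) → Fin n → 𝒜) : Prop :=
  ∀ m y, 0 < outLaw W f m y → ∑ k, c (f m y k) ≤ n * Γ

/-- `M*_fb(n,ε,Γ)`: the largest message-set size of a feedback code with a.s. cost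
constraint `Γ` and average error probability at most `ε`. -/
def MstarFB (W : 𝒜 → ℬ → ℝ) (c : 𝒜 → ℝ) (n : ℕ) (ε Γ : ℝ) : ℕ :=
  sSup {M : ℕ | ∃ f : Fin M → (Fin n → ℬ) → Fin n → 𝒜, ∃ g : (Fin n → ℬ) → Fin M,
    (∀ m, CausalEnc (f m)) ∧ ASCostFB W c Γ f ∧ errProbFB W f g ≤ ε}

open scoped Classical

/-- A controller: for each time `k` it maps the past inputs `x^k` and outputs `y^k` to a
distribution on the next input. -/
def Ctrl (𝒜 ℬ : Type*) (n : ℕ) : Type _ :=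
  ∀ k : Fin n, (Fin k.val → 𝒜) → (Fin k.val → ℬ) → 𝒜 → ℝ

/-- Restriction of a length-`n` sequence to the times before `k`. -/
def pre {α : Type*} {n : ℕ} (x : Fin n → α) (k : Fin n) : Fin k.val → α :=
  fun i => x ⟨i.val, i.isLt.trans k.isLt⟩

/-- Every row of a controller is a probability vector. -/
def IsController {n : ℕ} (F : Ctrl 𝒜 ℬ n) : Prop :=
  ∀ (k : Fin n) (xs : Fin k.val → 𝒜) (ys : Fin k.val → ℬ),
    (∀ a, 0 ≤ F k xs ys a) ∧ ∑ a, F k xs ys a = 1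

/-- The joint law `(F∘W)(xⁿ,yⁿ) = Π_k F(x_k|x^{k−1},y^{k−1})·W(y_k|x_k)`. -/
def ctrlLaw (W : 𝒜 → ℬ → ℝ) {n : ℕ} (F : Ctrl 𝒜 ℬ n)
    (x : Fin n → 𝒜) (y : Fin n → ℬ) : ℝ :=
  ∏ k, F k (pre x k) (pre y k) (x k) * W (x k) (y k)

private lemma chainSum {α : Type*} [Fintype α] :
    ∀ (n : ℕ) (K : ∀ k : Fin n, (Fin k.val → α) → α → ℝ),
      (∀ k xs, ∑ a, K k xs a = 1) →
      ∑ x : Fin n → α, ∏ k, K k (pre x k) (x k) = 1 := by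
  intro n
  induction n with
  | zero =>
    intro K hK
    simp
  | succ n ih =>
    intro K hK
    set e : α × (Fin n → α) ≃ (Fin (n+1) → α) := Fin.snocEquiv (fun _ => α) with he
    rw [← Equiv.sum_comp e (fun x : Fin (n+1) → α => ∏ k, K k (pre x k) (x k))]
    rw [Fintype.sum_prod_type]
    have key : ∀ (a : α) (xs : Fin n → α),
        (∏ k, K k (pre (e (a, xs)) k) (e (a, xs) k)) =
        (∏ k : Fin n, K k.castSucc (pre xs k) (xs k)) * K (Fin.last n) xs a := by
      intro a xs
      have hsnoc : e (a, xs) = Fin.snoc xs a := by rw [he]; rfl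
      rw [hsnoc, Fin.prod_univ_castSucc]
      congr 1
      · apply Finset.prod_congr rfl
        intro k _
        have h1 : pre (Fin.snoc xs a : Fin (n+1) → α) k.castSucc = pre xs k := by
          funext i
          have hi : (i : ℕ) < n := lt_trans i.isLt k.isLt
          show (Fin.snoc xs a : Fin (n+1) → α) (Fin.castSucc ⟨i, hi⟩) = xs ⟨i, hi⟩
          rw [Fin.snoc_castSucc]
        have h2 : (Fin.snoc xs a : Fin (n+1) → α) k.castSucc = xs k := by
          simp
        rw [h1, h2]
      · have h3 : pre (Fin.snoc xs a : Fin (n+1) → α) (Fin.last n) = xs := by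
          funext i
          show (Fin.snoc xs a : Fin (n+1) → α) (Fin.castSucc ⟨i, i.isLt⟩) = xs i
          rw [Fin.snoc_castSucc]
          exact congrArg xs (Fin.ext rfl)
        have h4 : (Fin.snoc xs a : Fin (n+1) → α) (Fin.last n) = a := by simp
        rw [h3, h4]
    calc ∑ a : α, ∑ xs : Fin n → α, ∏ k, K k (pre (e (a, xs)) k) (e (a, xs) k)
        = ∑ a : α, ∑ xs : Fin n → α,
            (∏ k : Fin n, K k.castSucc (pre xs k) (xs k)) * K (Fin.last n) xs a := by
          exact Finset.sum_congr rfl fun a _ => Finset.sum_congr rfl fun xs _ => key a xs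
      _ = ∑ xs : Fin n → α, (∏ k : Fin n, K k.castSucc (pre xs k) (xs k)) *
            (∑ a : α, K (Fin.last n) xs a) := by
          rw [Finset.sum_comm]
          exact Finset.sum_congr rfl fun xs _ => (Finset.mul_sum _ _ _).symm
      _ = 1 := by
          simp only [hK]
          simpa using ih (fun k => K k.castSucc) (fun k xs => hK k.castSucc xs)

section AuxLemmas

variable {n M : ℕ}

private lemma outLaw_sum (W : 𝒜 → ℬ → ℝ) (hW : IsChannel W)
    (f₀ : (Fin n → ℬ) → Fin n → 𝒜) (hf : CausalEnc f₀) :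
    ∑ y : Fin n → ℬ, ∏ k, W (f₀ y k) (y k) = 1 := by
  obtain ⟨b₀⟩ := (inferInstance : Nonempty ℬ)
  have h := chainSum n
    (fun k ys b => W (f₀ (fun i => if h : i.val < k.val then ys ⟨i.val, h⟩ else b₀) k) b)
    (fun k ys => hW.2 _)
  rw [← h]
  refine Finset.sum_congr rfl fun y _ => Finset.prod_congr rfl fun k _ => ?_
  congr 1
  refine (hf _ y k fun i hik => ?_).symm
  have : (i : ℕ) < (k : ℕ) := hik
  simp only [dif_pos this, pre]

private lemma ctrlLaw_nonneg (W : 𝒜 → ℬ → ℝ) (hW : IsChannel W)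
    (F : Ctrl 𝒜 ℬ n) (hF : IsController F) (x : Fin n → 𝒜) (y : Fin n → ℬ) :
    0 ≤ ctrlLaw W F x y := by
  refine Finset.prod_nonneg fun k _ => mul_nonneg ((hF k _ _).1 _) (hW.1 _ _)

private lemma outLaw_nonneg (W : 𝒜 → ℬ → ℝ) (hW : IsChannel W)
    (f : Fin M → (Fin n → ℬ) → Fin n → 𝒜) (m : Fin M) (y : Fin n → ℬ) :
    0 ≤ outLaw W f m y :=
  Finset.prod_nonneg fun k _ => hW.1 _ _

private lemma ctrlLaw_sum (W : 𝒜 → ℬ → ℝ) (hW : IsChannel W)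
    (F : Ctrl 𝒜 ℬ n) (hF : IsController F) :
    ∑ x : Fin n → 𝒜, ∑ y : Fin n → ℬ, ctrlLaw W F x y = 1 := by
  have h := chainSum (α := 𝒜 × ℬ) n
    (fun k zs p => F k (fun i => (zs i).1) (fun i => (zs i).2) p.1 * W p.1 p.2)
    (fun k zs => by
      rw [Fintype.sum_prod_type]
      calc ∑ a : 𝒜, ∑ b : ℬ, F k (fun i => (zs i).1) (fun i => (zs i).2) a * W a b
          = ∑ a : 𝒜, F k (fun i => (zs i).1) (fun i => (zs i).2) a * ∑ b, W a b := by
            exact Finset.sum_congr rfl fun a _ => (Finset.mul_sum _ _ _).symm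
        _ = 1 := by simp only [hW.2, mul_one]; exact (hF k _ _).2)
  rw [← Equiv.sum_comp ((Equiv.arrowProdEquivProdArrow (Fin n) (fun _ => 𝒜) (fun _ => ℬ)).symm)
    (fun z : Fin n → 𝒜 × ℬ =>
    ∏ k, (fun k (zs : Fin k.val → 𝒜 × ℬ) (p : 𝒜 × ℬ) =>
      F k (fun i => (zs i).1) (fun i => (zs i).2) p.1 * W p.1 p.2) k (pre z k) (z k))] at h
  rw [Fintype.sum_prod_type] at h
  rw [← h]
  rfl

end AuxLemmas


section CodeCtrl
set_option linter.unusedSectionVars false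
set_option linter.unusedVariables false

variable {n M : ℕ}

private def extb (b₀ : ℬ) (k : Fin n) (ys : Fin k.val → ℬ) : Fin n → ℬ :=
  fun i => if h : i.val < k.val then ys ⟨i.val, h⟩ else b₀

private def consSet (f : Fin M → (Fin n → ℬ) → Fin n → 𝒜) (b₀ : ℬ)
    (k : Fin n) (xs : Fin k.val → 𝒜) (ys : Fin k.val → ℬ) : Finset (Fin M) :=
  Finset.univ.filter fun m =>
    ∀ i : Fin k.val, f m (extb b₀ k ys) ⟨i.val, i.isLt.trans k.isLt⟩ = xs i

private def Fc (f : Fin M → (Fin n → ℬ) → Fin n → 𝒜) (a₀ : 𝒜) (b₀ : ℬ) : Ctrl 𝒜 ℬ n :=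
  fun k xs ys a =>
    if (consSet f b₀ k xs ys).card = 0 then (if a = a₀ then 1 else 0)
    else (((consSet f b₀ k xs ys).filter fun m => f m (extb b₀ k ys) k = a).card : ℝ) /
      ((consSet f b₀ k xs ys).card : ℝ)

private def Aset (f : Fin M → (Fin n → ℬ) → Fin n → 𝒜)
    (x : Fin n → 𝒜) (y : Fin n → ℬ) (j : ℕ) : Finset (Fin M) :=
  Finset.univ.filter fun m => ∀ i : Fin n, i.val < j → f m y i = x i

private lemma Fc_isController (f : Fin M → (Fin n → ℬ) → Fin n → 𝒜) (a₀ : 𝒜) (b₀ : ℬ) :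
    IsController (Fc f a₀ b₀) := by
  intro k xs ys
  constructor
  · intro a
    unfold Fc
    split_ifs with h h2
    · norm_num
    · norm_num
    · positivity
  · unfold Fc
    by_cases h : (consSet f b₀ k xs ys).card = 0
    · simp [h]
    · simp only [if_neg h]
      rw [← Finset.sum_div]
      rw [div_eq_one_iff_eq (by exact_mod_cast h)]
      rw [← Nat.cast_sum]
      congr 1
      exact (Finset.card_eq_sum_card_fiberwise
        (fun m _ => Finset.mem_univ (f m (extb b₀ k ys) k))).symm

private lemma f_extb (f : Fin M → (Fin n → ℬ) → Fin n → 𝒜) (b₀ : ℬ)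
    (hcaus : ∀ m, CausalEnc (f m)) (m : Fin M) (y : Fin n → ℬ) (k j : Fin n)
    (hj : j.val ≤ k.val) : f m (extb b₀ k (pre y k)) j = f m y j := by
  apply hcaus m _ y j
  intro i hij
  have hik : (i : ℕ) < (k : ℕ) := lt_of_lt_of_le hij hj
  simp only [extb, pre, dif_pos hik]

private lemma consSet_pre (f : Fin M → (Fin n → ℬ) → Fin n → 𝒜) (b₀ : ℬ)
    (hcaus : ∀ m, CausalEnc (f m)) (x : Fin n → 𝒜) (y : Fin n → ℬ) (k : Fin n) :
    consSet f b₀ k (pre x k) (pre y k) = Aset f x y k.val := by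
  ext m
  simp only [consSet, Aset, Finset.mem_filter, Finset.mem_univ, true_and]
  constructor
  · intro h i hi
    have h2 := h ⟨i.val, hi⟩
    rwa [f_extb f b₀ hcaus m y k ⟨i.val, i.isLt⟩ (le_of_lt hi)] at h2
  · intro h i
    rw [f_extb f b₀ hcaus m y k ⟨i.val, i.isLt.trans k.isLt⟩ (le_of_lt i.isLt)]
    exact h ⟨i.val, i.isLt.trans k.isLt⟩ i.isLt

private lemma Aset_antitone (f : Fin M → (Fin n → ℬ) → Fin n → 𝒜)
    (x : Fin n → 𝒜) (y : Fin n → ℬ) (j : ℕ) :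
    Aset f x y (j+1) ⊆ Aset f x y j := by
  intro m hm
  simp only [Aset, Finset.mem_filter, Finset.mem_univ, true_and] at hm ⊢
  exact fun i hi => hm i (Nat.lt_succ_of_lt hi)

private lemma Fc_step (f : Fin M → (Fin n → ℬ) → Fin n → 𝒜) (a₀ : 𝒜) (b₀ : ℬ)
    (hcaus : ∀ m, CausalEnc (f m)) (x : Fin n → 𝒜) (y : Fin n → ℬ) (k : Fin n) :
    ((Aset f x y k.val).card : ℝ) * Fc f a₀ b₀ k (pre x k) (pre y k) (x k)
      = ((Aset f x y (k.val+1)).card : ℝ) := by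
  have hps : consSet f b₀ k (pre x k) (pre y k) = Aset f x y k.val :=
    consSet_pre f b₀ hcaus x y k
  have hfilt : (Aset f x y k.val).filter (fun m => f m (extb b₀ k (pre y k)) k = x k)
      = Aset f x y (k.val+1) := by
    ext m
    simp only [Aset, Finset.mem_filter, Finset.mem_univ, true_and]
    rw [f_extb f b₀ hcaus m y k k le_rfl]
    constructor
    · rintro ⟨h1, h2⟩ i hi
      rcases Nat.lt_or_ge i.val k.val with hlt | hge
      · exact h1 i hlt
      · have hik : i = k := Fin.ext (by omega)
        rw [hik]; exact h2
    · intro h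
      exact ⟨fun i hi => h i (Nat.lt_succ_of_lt hi), h k (Nat.lt_succ_self _)⟩
  unfold Fc
  rw [hps]
  by_cases h : (Aset f x y k.val).card = 0
  · rw [if_pos h, h]
    have h0 : (Aset f x y (k.val+1)).card = 0 :=
      Nat.le_zero.mp (h ▸ Finset.card_le_card (Aset_antitone f x y k.val))
    rw [h0]
    simp
  · rw [if_neg h, hfilt, ← mul_div_assoc, mul_comm, mul_div_assoc,
      div_self (by exact_mod_cast h), mul_one]

private lemma Fc_prod (f : Fin M → (Fin n → ℬ) → Fin n → 𝒜) (a₀ : 𝒜) (b₀ : ℬ)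
    (hcaus : ∀ m, CausalEnc (f m)) (x : Fin n → 𝒜) (y : Fin n → ℬ) :
    (M : ℝ) * ∏ k : Fin n, Fc f a₀ b₀ k (pre x k) (pre y k) (x k)
      = ((Aset f x y n).card : ℝ) := by
  have key : ∀ j ≤ n, (M : ℝ) * ∏ r ∈ Finset.range j,
      (fun r => if h : r < n then
        Fc f a₀ b₀ ⟨r, h⟩ (pre x ⟨r, h⟩) (pre y ⟨r, h⟩) (x ⟨r, h⟩) else 1) r
      = ((Aset f x y j).card : ℝ) := by
    intro j
    induction j with
    | zero =>
      intro _
      rw [Finset.prod_range_zero, mul_one]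
      have : Aset f x y 0 = Finset.univ := by
        ext m; simp [Aset]
      rw [this]
      simp
    | succ j ih =>
      intro hj
      have hjn : j < n := hj
      rw [Finset.prod_range_succ, ← mul_assoc, ih (le_of_lt hjn), dif_pos hjn]
      exact Fc_step f a₀ b₀ hcaus x y ⟨j, hjn⟩
  have h2 := key n le_rfl
  rw [← Fin.prod_univ_eq_prod_range] at h2
  rw [← h2]
  congr 1
  refine Finset.prod_congr rfl fun k _ => ?_
  rw [dif_pos k.isLt]

private lemma ctrlLaw_Fc (W : 𝒜 → ℬ → ℝ) (f : Fin M → (Fin n → ℬ) → Fin n → 𝒜)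
    (a₀ : 𝒜) (b₀ : ℬ) (hcaus : ∀ m, CausalEnc (f m)) (hM : 0 < M)
    (x : Fin n → 𝒜) (y : Fin n → ℬ) :
    ctrlLaw W (Fc f a₀ b₀) x y
      = ((Aset f x y n).card : ℝ) / M * ∏ k, W (x k) (y k) := by
  have hM' : (M : ℝ) ≠ 0 := Nat.cast_ne_zero.mpr hM.ne'
  unfold ctrlLaw
  rw [Finset.prod_mul_distrib, ← Fc_prod f a₀ b₀ hcaus x y, mul_comm (M:ℝ),
    mul_div_assoc, div_self hM', mul_one]

private lemma sum_phi (W : 𝒜 → ℬ → ℝ) (f : Fin M → (Fin n → ℬ) → Fin n → 𝒜)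
    (a₀ : 𝒜) (b₀ : ℬ) (hcaus : ∀ m, CausalEnc (f m)) (hM : 0 < M)
    (y : Fin n → ℬ) (φ : (Fin n → 𝒜) → ℝ) :
    ∑ x : Fin n → 𝒜, φ x * ctrlLaw W (Fc f a₀ b₀) x y
      = (M : ℝ)⁻¹ * ∑ m, φ (fun k => f m y k) * outLaw W f m y := by
  have hcard : ∀ x : Fin n → 𝒜, ((Aset f x y n).card : ℝ)
      = ∑ m : Fin M, if (fun k => f m y k) = x then (1:ℝ) else 0 := by
    intro x
    rw [Aset, Finset.card_filter]
    push_cast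
    refine Finset.sum_congr rfl fun m _ => ?_
    have hiff : (∀ i : Fin n, i.val < n → f m y i = x i) ↔ ((fun k => f m y k) = x) :=
      ⟨fun h => funext fun k => h k k.isLt, fun h i _ => congrFun h i⟩
    rw [if_congr hiff rfl rfl]
  calc ∑ x : Fin n → 𝒜, φ x * ctrlLaw W (Fc f a₀ b₀) x y
      = ∑ x : Fin n → 𝒜, ∑ m : Fin M, (if (fun k => f m y k) = x then (1:ℝ) else 0)
          * ((M : ℝ)⁻¹ * (φ x * ∏ k, W (x k) (y k))) := by
        refine Finset.sum_congr rfl fun x _ => ?_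
        rw [ctrlLaw_Fc W f a₀ b₀ hcaus hM, hcard x, div_eq_mul_inv, Finset.sum_mul,
          Finset.sum_mul, Finset.mul_sum]
        refine Finset.sum_congr rfl fun m _ => ?_
        ring
    _ = ∑ m : Fin M, ∑ x : Fin n → 𝒜, (if (fun k => f m y k) = x then (1:ℝ) else 0)
          * ((M : ℝ)⁻¹ * (φ x * ∏ k, W (x k) (y k))) := Finset.sum_comm
    _ = ∑ m : Fin M, (M : ℝ)⁻¹ * (φ (fun k => f m y k) * outLaw W f m y) := by
        refine Finset.sum_congr rfl fun m _ => ?_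
        simp only [boole_mul]
        rw [Finset.sum_ite_eq Finset.univ (fun k => f m y k)
          (fun x => (M : ℝ)⁻¹ * (φ x * ∏ k, W (x k) (y k)))]
        simp only [Finset.mem_univ, if_pos]
        rfl
    _ = (M : ℝ)⁻¹ * ∑ m, φ (fun k => f m y k) * outLaw W f m y := by
        rw [Finset.mul_sum]

end CodeCtrl

/-- Lemma 1 of the paper (meta-converse with feedback under the a.s. cost constraint):
if `δ := 1 − ε − sup_F inf_q (F∘W)(W(Yⁿ|Xⁿ) > ρ·q(Yⁿ)) > 0`, where the supremum is over
controllers putting full mass on inputs of average cost at most `Γ`, then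
`log M*_fb(n,ε,Γ) ≤ log ρ − log δ`. -/
theorem stmt_15 (W : 𝒜 → ℬ → ℝ) (hW : IsChannel W) (c : 𝒜 → ℝ) (cmax : ℝ)
    (hc : ∀ a, 0 ≤ c a ∧ c a ≤ cmax)
    (n : ℕ) (hn : 1 ≤ n) (ρ : ℝ) (hρ : 0 < ρ)
    (ε : ℝ) (hε : ε ∈ Set.Ioo (0 : ℝ) 1)
    (Γ : ℝ) (hΓ₁ : Gamma0 c < Γ) (hΓ₂ : Γ < GammaStar W c)
    (δ : ℝ)
    (hδdef : δ = 1 - ε - sSup {v : ℝ | ∃ F : Ctrl 𝒜 ℬ n, IsController F ∧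
        (∑ x : Fin n → 𝒜, ∑ y : Fin n → ℬ,
          (if (∑ k, c (x k)) ≤ n * Γ then ctrlLaw W F x y else 0)) = 1 ∧
        v = sInf {u : ℝ | ∃ q : (Fin n → ℬ) → ℝ,
          ((∀ y, 0 ≤ q y) ∧ ∑ y : Fin n → ℬ, q y = 1) ∧
          u = ∑ x : Fin n → 𝒜, ∑ y : Fin n → ℬ,
            (if ρ * q y < ∏ k, W (x k) (y k) then ctrlLaw W F x y else 0)}})
    (hδ : 0 < δ) :
    Real.log (MstarFB W c n ε Γ) ≤ Real.log ρ - Real.log δ := by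
  obtain ⟨hε0, hε1⟩ := hε
  obtain ⟨a₀⟩ := (inferInstance : Nonempty 𝒜)
  obtain ⟨b₀⟩ := (inferInstance : Nonempty ℬ)
  set 𝒮 : Set ℝ := {v : ℝ | ∃ F : Ctrl 𝒜 ℬ n, IsController F ∧
        (∑ x : Fin n → 𝒜, ∑ y : Fin n → ℬ,
          (if (∑ k, c (x k)) ≤ n * Γ then ctrlLaw W F x y else 0)) = 1 ∧
        v = sInf {u : ℝ | ∃ q : (Fin n → ℬ) → ℝ,
          ((∀ y, 0 ≤ q y) ∧ ∑ y : Fin n → ℬ, q y = 1) ∧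
          u = ∑ x : Fin n → 𝒜, ∑ y : Fin n → ℬ,
            (if ρ * q y < ∏ k, W (x k) (y k) then ctrlLaw W F x y else 0)}} with h𝒮
  -- uniform output distribution
  have hcardB : (0:ℝ) < (Fintype.card (Fin n → ℬ) : ℝ) := by
    exact_mod_cast Fintype.card_pos
  have hq0 : (∀ y : Fin n → ℬ, 0 ≤ (Fintype.card (Fin n → ℬ) : ℝ)⁻¹) ∧
      ∑ _y : Fin n → ℬ, (Fintype.card (Fin n → ℬ) : ℝ)⁻¹ = 1 := by
    constructor
    · intro _; positivity
    · rw [Finset.sum_const, Finset.card_univ, nsmul_eq_mul, mul_inv_cancel₀ hcardB.ne']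
  -- the inner candidate set is nonempty and bounded below, for any controller F
  have hUne : ∀ F : Ctrl 𝒜 ℬ n, Set.Nonempty {u : ℝ | ∃ q : (Fin n → ℬ) → ℝ,
      ((∀ y, 0 ≤ q y) ∧ ∑ y : Fin n → ℬ, q y = 1) ∧
      u = ∑ x : Fin n → 𝒜, ∑ y : Fin n → ℬ,
        (if ρ * q y < ∏ k, W (x k) (y k) then ctrlLaw W F x y else 0)} := by
    intro F
    exact ⟨_, ⟨fun _ => (Fintype.card (Fin n → ℬ) : ℝ)⁻¹, hq0, rfl⟩⟩
  have hUlb : ∀ F : Ctrl 𝒜 ℬ n, IsController F → ∀ u ∈ {u : ℝ | ∃ q : (Fin n → ℬ) → ℝ,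
      ((∀ y, 0 ≤ q y) ∧ ∑ y : Fin n → ℬ, q y = 1) ∧
      u = ∑ x : Fin n → 𝒜, ∑ y : Fin n → ℬ,
        (if ρ * q y < ∏ k, W (x k) (y k) then ctrlLaw W F x y else 0)}, (0:ℝ) ≤ u := by
    rintro F hF u ⟨q, hq, rfl⟩
    refine Finset.sum_nonneg fun x _ => Finset.sum_nonneg fun y _ => ?_
    split_ifs
    · exact ctrlLaw_nonneg W hW F hF x y
    · exact le_refl 0
  have hbddS : BddAbove 𝒮 := by
    refine ⟨1, ?_⟩
    rintro v ⟨F, hF, hmass, rfl⟩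
    refine le_trans (csInf_le ⟨0, fun u hu => hUlb F hF u hu⟩
      ⟨fun _ => (Fintype.card (Fin n → ℬ) : ℝ)⁻¹, hq0, rfl⟩) ?_
    calc ∑ x : Fin n → 𝒜, ∑ y : Fin n → ℬ,
          (if ρ * (Fintype.card (Fin n → ℬ) : ℝ)⁻¹ < ∏ k, W (x k) (y k)
            then ctrlLaw W F x y else 0)
        ≤ ∑ x : Fin n → 𝒜, ∑ y : Fin n → ℬ, ctrlLaw W F x y := by
          refine Finset.sum_le_sum fun x _ => Finset.sum_le_sum fun y _ => ?_
          split_ifs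
          · exact le_refl _
          · exact ctrlLaw_nonneg W hW F hF x y
      _ = 1 := ctrlLaw_sum W hW F hF
  -- key bound for every achievable code size
  have key : ∀ M' : ℕ, M' ∈ {M : ℕ | ∃ f : Fin M → (Fin n → ℬ) → Fin n → 𝒜,
      ∃ g : (Fin n → ℬ) → Fin M,
      (∀ m, CausalEnc (f m)) ∧ ASCostFB W c Γ f ∧ errProbFB W f g ≤ ε} →
      (M' : ℝ) * δ ≤ ρ := by
    rintro M' ⟨f, g, hcausal, hcost, herr⟩
    rcases Nat.eq_zero_or_pos M' with h0 | hMpos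
    · subst h0; simpa using hρ.le
    have hMne : ((M' : ℝ)) ≠ 0 := Nat.cast_ne_zero.mpr hMpos.ne'
    have hMnn : (0:ℝ) ≤ (M' : ℝ) := Nat.cast_nonneg _
    -- the controller induced by the code
    have hF : IsController (Fc f a₀ b₀) := Fc_isController f a₀ b₀
    have houtsum : ∀ m : Fin M', ∑ y : Fin n → ℬ, outLaw W f m y = 1 := by
      intro m
      have := outLaw_sum W hW (f m) (hcausal m)
      simpa [outLaw] using this
    have hmass : (∑ x : Fin n → 𝒜, ∑ y : Fin n → ℬ,
        (if (∑ k, c (x k)) ≤ n * Γ then ctrlLaw W (Fc f a₀ b₀) x y else 0)) = 1 := by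
      rw [Finset.sum_comm]
      have step1 : ∀ y : Fin n → ℬ,
          (∑ x : Fin n → 𝒜, (if (∑ k, c (x k)) ≤ n * Γ then ctrlLaw W (Fc f a₀ b₀) x y else 0))
          = (M' : ℝ)⁻¹ * ∑ m, outLaw W f m y := by
        intro y
        calc ∑ x : Fin n → 𝒜, (if (∑ k, c (x k)) ≤ n * Γ then ctrlLaw W (Fc f a₀ b₀) x y else 0)
            = ∑ x : Fin n → 𝒜, (if (∑ k, c (x k)) ≤ n * Γ then (1:ℝ) else 0)
                * ctrlLaw W (Fc f a₀ b₀) x y := by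
              refine Finset.sum_congr rfl fun x _ => ?_
              rw [boole_mul]
          _ = (M' : ℝ)⁻¹ * ∑ m, (if (∑ k, c (f m y k)) ≤ n * Γ then (1:ℝ) else 0)
                * outLaw W f m y :=
              sum_phi W f a₀ b₀ hcausal hMpos y
                (fun x => if (∑ k, c (x k)) ≤ n * Γ then (1:ℝ) else 0)
          _ = (M' : ℝ)⁻¹ * ∑ m, outLaw W f m y := by
              congr 1
              refine Finset.sum_congr rfl fun m _ => ?_
              rcases eq_or_lt_of_le (outLaw_nonneg W hW f m y) with hql | hql
              · rw [← hql, mul_zero]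
              · rw [if_pos (hcost m y hql), one_mul]
      calc ∑ y : Fin n → ℬ, ∑ x : Fin n → 𝒜,
            (if (∑ k, c (x k)) ≤ n * Γ then ctrlLaw W (Fc f a₀ b₀) x y else 0)
          = ∑ y : Fin n → ℬ, (M' : ℝ)⁻¹ * ∑ m, outLaw W f m y :=
            Finset.sum_congr rfl fun y _ => step1 y
        _ = (M' : ℝ)⁻¹ * ∑ y : Fin n → ℬ, ∑ m, outLaw W f m y :=
            (Finset.mul_sum _ _ _).symm
        _ = (M' : ℝ)⁻¹ * ∑ m, ∑ y : Fin n → ℬ, outLaw W f m y := by rw [Finset.sum_comm]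
        _ = 1 := by
            simp only [houtsum, Finset.sum_const, Finset.card_univ, Fintype.card_fin,
              nsmul_eq_mul, mul_one]
            exact inv_mul_cancel₀ hMne
    have hkeyU : ∀ u ∈ {u : ℝ | ∃ q : (Fin n → ℬ) → ℝ,
        ((∀ y, 0 ≤ q y) ∧ ∑ y : Fin n → ℬ, q y = 1) ∧
        u = ∑ x : Fin n → 𝒜, ∑ y : Fin n → ℬ,
          (if ρ * q y < ∏ k, W (x k) (y k) then ctrlLaw W (Fc f a₀ b₀) x y else 0)},
        1 - ε - ρ / M' ≤ u := by
      rintro u ⟨q, ⟨hqnn, hqsum⟩, rfl⟩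
      have hu : (∑ x : Fin n → 𝒜, ∑ y : Fin n → ℬ,
          (if ρ * q y < ∏ k, W (x k) (y k) then ctrlLaw W (Fc f a₀ b₀) x y else 0))
          = (M' : ℝ)⁻¹ * ∑ m, ∑ y : Fin n → ℬ,
            (if ρ * q y < outLaw W f m y then outLaw W f m y else 0) := by
        rw [Finset.sum_comm]
        have step1 : ∀ y : Fin n → ℬ,
            (∑ x : Fin n → 𝒜,
              (if ρ * q y < ∏ k, W (x k) (y k) then ctrlLaw W (Fc f a₀ b₀) x y else 0))
            = (M' : ℝ)⁻¹ * ∑ m,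
              (if ρ * q y < outLaw W f m y then outLaw W f m y else 0) := by
          intro y
          calc ∑ x : Fin n → 𝒜,
              (if ρ * q y < ∏ k, W (x k) (y k) then ctrlLaw W (Fc f a₀ b₀) x y else 0)
              = ∑ x : Fin n → 𝒜, (if ρ * q y < ∏ k, W (x k) (y k) then (1:ℝ) else 0)
                  * ctrlLaw W (Fc f a₀ b₀) x y := by
                refine Finset.sum_congr rfl fun x _ => ?_
                rw [boole_mul]
            _ = (M' : ℝ)⁻¹ * ∑ m, (if ρ * q y < ∏ k, W (f m y k) (y k) then (1:ℝ) else 0)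
                  * outLaw W f m y :=
                sum_phi W f a₀ b₀ hcausal hMpos y
                  (fun x => if ρ * q y < ∏ k, W (x k) (y k) then (1:ℝ) else 0)
            _ = (M' : ℝ)⁻¹ * ∑ m,
                  (if ρ * q y < outLaw W f m y then outLaw W f m y else 0) := by
                congr 1
                refine Finset.sum_congr rfl fun m _ => ?_
                rw [boole_mul]
                rfl
        calc ∑ y : Fin n → ℬ, ∑ x : Fin n → 𝒜,
              (if ρ * q y < ∏ k, W (x k) (y k) then ctrlLaw W (Fc f a₀ b₀) x y else 0)
            = ∑ y : Fin n → ℬ, (M' : ℝ)⁻¹ * ∑ m,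
                (if ρ * q y < outLaw W f m y then outLaw W f m y else 0) :=
              Finset.sum_congr rfl fun y _ => step1 y
          _ = (M' : ℝ)⁻¹ * ∑ y : Fin n → ℬ, ∑ m,
                (if ρ * q y < outLaw W f m y then outLaw W f m y else 0) :=
              (Finset.mul_sum _ _ _).symm
          _ = (M' : ℝ)⁻¹ * ∑ m, ∑ y : Fin n → ℬ,
                (if ρ * q y < outLaw W f m y then outLaw W f m y else 0) := by
              rw [Finset.sum_comm]
      have hone : (M' : ℝ)⁻¹ * ∑ m : Fin M', ∑ y : Fin n → ℬ, outLaw W f m y = 1 := by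
        simp only [houtsum, Finset.sum_const, Finset.card_univ, Fintype.card_fin,
          nsmul_eq_mul, mul_one]
        exact inv_mul_cancel₀ hMne
      have hsplit : ∑ m : Fin M', ∑ y : Fin n → ℬ, outLaw W f m y
          = (∑ m : Fin M', ∑ y : Fin n → ℬ, (if g y = m then outLaw W f m y else 0))
            + (∑ m : Fin M', ∑ y : Fin n → ℬ, (if g y = m then 0 else outLaw W f m y)) := by
        rw [← Finset.sum_add_distrib]
        refine Finset.sum_congr rfl fun m _ => ?_
        rw [← Finset.sum_add_distrib]
        refine Finset.sum_congr rfl fun y _ => ?_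
        split_ifs <;> ring
      have herr' : (M' : ℝ)⁻¹ * ∑ m : Fin M', ∑ y : Fin n → ℬ,
          (if g y = m then 0 else outLaw W f m y) ≤ ε := herr
      have hcorrect : 1 - ε ≤ (M' : ℝ)⁻¹ * ∑ m : Fin M', ∑ y : Fin n → ℬ,
          (if g y = m then outLaw W f m y else 0) := by
        have h2 := hone
        rw [hsplit, mul_add] at h2
        linarith
      have hpoint : ∀ (m : Fin M') (y : Fin n → ℬ),
          (if g y = m then outLaw W f m y else 0)
          ≤ (if ρ * q y < outLaw W f m y then outLaw W f m y else 0)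
            + ρ * (if g y = m then q y else 0) := by
        intro m y
        by_cases h1 : g y = m
        · rw [if_pos h1, if_pos h1]
          by_cases h2 : ρ * q y < outLaw W f m y
          · rw [if_pos h2]
            nlinarith [hqnn y, hρ.le]
          · rw [if_neg h2]
            push_neg at h2
            linarith
        · rw [if_neg h1, if_neg h1, mul_zero, add_zero]
          split_ifs
          · exact outLaw_nonneg W hW f m y
          · exact le_refl 0
      have hqind : ∑ m : Fin M', ∑ y : Fin n → ℬ, (if g y = m then q y else 0) = 1 := by
        rw [Finset.sum_comm]
        calc ∑ y : Fin n → ℬ, ∑ m : Fin M', (if g y = m then q y else 0)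
            = ∑ y : Fin n → ℬ, q y := by
              refine Finset.sum_congr rfl fun y _ => ?_
              rw [Finset.sum_ite_eq Finset.univ (g y) (fun _ => q y)]
              simp
          _ = 1 := hqsum
      have hsum2 : (∑ m : Fin M', ∑ y : Fin n → ℬ, (if g y = m then outLaw W f m y else 0))
          ≤ (∑ m : Fin M', ∑ y : Fin n → ℬ,
              (if ρ * q y < outLaw W f m y then outLaw W f m y else 0))
            + ρ * (∑ m : Fin M', ∑ y : Fin n → ℬ, (if g y = m then q y else 0)) := by
        have h3 : ∀ m : Fin M', ∑ y : Fin n → ℬ,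
            ((if ρ * q y < outLaw W f m y then outLaw W f m y else 0)
              + ρ * (if g y = m then q y else 0))
            = (∑ y : Fin n → ℬ, (if ρ * q y < outLaw W f m y then outLaw W f m y else 0))
              + ρ * ∑ y : Fin n → ℬ, (if g y = m then q y else 0) := by
          intro m
          rw [Finset.mul_sum, ← Finset.sum_add_distrib]
        calc (∑ m : Fin M', ∑ y : Fin n → ℬ, (if g y = m then outLaw W f m y else 0))
            ≤ ∑ m : Fin M', ∑ y : Fin n → ℬ,
                ((if ρ * q y < outLaw W f m y then outLaw W f m y else 0)
                  + ρ * (if g y = m then q y else 0)) :=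
              Finset.sum_le_sum fun m _ => Finset.sum_le_sum fun y _ => hpoint m y
          _ = _ := by
              rw [Finset.sum_congr rfl fun m _ => h3 m, Finset.sum_add_distrib,
                Finset.mul_sum]
      rw [hu]
      have hfrac : ρ / (M' : ℝ) = ρ * (M' : ℝ)⁻¹ := div_eq_mul_inv ρ _
      have hinvnn : (0:ℝ) ≤ (M' : ℝ)⁻¹ := inv_nonneg.mpr hMnn
      have hmul := mul_le_mul_of_nonneg_left hsum2 hinvnn
      rw [hqind, mul_one] at hmul
      have hexp : (M' : ℝ)⁻¹ * ((∑ m : Fin M', ∑ y : Fin n → ℬ,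
          (if ρ * q y < outLaw W f m y then outLaw W f m y else 0)) + ρ)
          = (M' : ℝ)⁻¹ * (∑ m : Fin M', ∑ y : Fin n → ℬ,
            (if ρ * q y < outLaw W f m y then outLaw W f m y else 0)) + ρ * (M' : ℝ)⁻¹ := by
        ring
      rw [hexp] at hmul
      rw [hfrac]
      linarith
    have hvmem : sInf {u : ℝ | ∃ q : (Fin n → ℬ) → ℝ,
        ((∀ y, 0 ≤ q y) ∧ ∑ y : Fin n → ℬ, q y = 1) ∧
        u = ∑ x : Fin n → 𝒜, ∑ y : Fin n → ℬ,
          (if ρ * q y < ∏ k, W (x k) (y k) then ctrlLaw W (Fc f a₀ b₀) x y else 0)} ∈ 𝒮 :=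
      ⟨Fc f a₀ b₀, hF, hmass, rfl⟩
    have hvlb := le_csInf (hUne (Fc f a₀ b₀)) hkeyU
    have hsup := le_csSup hbddS hvmem
    have hδle : δ ≤ ρ / M' := by
      rw [hδdef]
      have := le_trans hvlb hsup
      linarith
    calc (M' : ℝ) * δ ≤ (M' : ℝ) * (ρ / M') := by
          exact mul_le_mul_of_nonneg_left hδle hMnn
      _ = ρ := by field_simp
  -- the code set contains 1 and is bounded above
  have h1mem : 1 ∈ {M : ℕ | ∃ f : Fin M → (Fin n → ℬ) → Fin n → 𝒜,
      ∃ g : (Fin n → ℬ) → Fin M,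
      (∀ m, CausalEnc (f m)) ∧ ASCostFB W c Γ f ∧ errProbFB W f g ≤ ε} := by
    obtain ⟨amin, -, hamin⟩ := Finset.exists_min_image Finset.univ c
      ⟨a₀, Finset.mem_univ a₀⟩
    have hamin' : c amin ≤ Γ := by
      have h1 : c amin ≤ Gamma0 c := le_ciInf fun a => hamin a (Finset.mem_univ a)
      linarith
    refine ⟨fun _ _ _ => amin, fun _ => 0, fun m y y' k _ => rfl, ?_, ?_⟩
    · intro m y _
      rw [Finset.sum_const, Finset.card_univ, Fintype.card_fin, nsmul_eq_mul]
      exact mul_le_mul_of_nonneg_left hamin' (Nat.cast_nonneg n)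
    · have hg : ∀ (m : Fin 1) (y : Fin n → ℬ), (0 : Fin 1) = m := fun m _ =>
        Subsingleton.elim _ _
      rw [errProbFB]
      have hz : ∀ (m : Fin 1), ∑ y : Fin n → ℬ,
          (if (fun _ : Fin n → ℬ => (0 : Fin 1)) y = m then 0
            else outLaw W (fun _ _ _ => amin) m y) = 0 := by
        intro m
        refine Finset.sum_eq_zero fun y _ => ?_
        rw [if_pos (hg m y)]
      simp only [hz, Finset.sum_const_zero, mul_zero]
      exact hε0.le
  have hbddcode : BddAbove {M : ℕ | ∃ f : Fin M → (Fin n → ℬ) → Fin n → 𝒜,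
      ∃ g : (Fin n → ℬ) → Fin M,
      (∀ m, CausalEnc (f m)) ∧ ASCostFB W c Γ f ∧ errProbFB W f g ≤ ε} := by
    refine ⟨Nat.floor (ρ / δ), fun M' hM' => ?_⟩
    refine Nat.le_floor ?_
    rw [le_div_iff₀ hδ]
    exact key M' hM'
  have hMdef : MstarFB W c n ε Γ = sSup {M : ℕ | ∃ f : Fin M → (Fin n → ℬ) → Fin n → 𝒜,
      ∃ g : (Fin n → ℬ) → Fin M,
      (∀ m, CausalEnc (f m)) ∧ ASCostFB W c Γ f ∧ errProbFB W f g ≤ ε} := rfl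
  have hmem := Nat.sSup_mem ⟨1, h1mem⟩ hbddcode
  have hge1 : 1 ≤ MstarFB W c n ε Γ := by
    rw [hMdef]; exact le_csSup hbddcode h1mem
  have hfin : (MstarFB W c n ε Γ : ℝ) * δ ≤ ρ := by
    rw [hMdef]; exact key _ hmem
  have hpos : (0:ℝ) < (MstarFB W c n ε Γ : ℝ) := by exact_mod_cast hge1
  have hle : (MstarFB W c n ε Γ : ℝ) ≤ ρ / δ := (le_div_iff₀ hδ).mpr hfin
  calc Real.log (MstarFB W c n ε Γ) ≤ Real.log (ρ / δ) := Real.log_le_log hpos hle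
    _ = Real.log ρ - Real.log δ := Real.log_div hρ.ne' hδ.ne'


end Feedback

end Paper
end
end

section
/- Let S ⊆ 𝒜ⁿ be nonempty. For 0 ≤ k ≤ n−1 and x^k ∈ 𝒜^k, let 𝒜_{x^k} := { x ∈ 𝒜 : (x^k, x) is a prefix of some element of S }, and fix an element (a₀,…,a_{n−1}) ∈ S. Given any controller F, define the modified controller F_S by: F_S(·|x^k,y^k) is F(·|x^k,y^k) conditioned on 𝒜_{x^k} if F(𝒜_{x^k}|x^k,y^k) > 0; uniform on 𝒜_{x^k} if F(𝒜_{x^k}|x^k,y^k) = 0 and 𝒜_{x^k} ≠ ∅; and the point mass at a_k otherwise. Then: (i) (F_S∘W)(S × ℬⁿ) = 1; and (ii) for every (xⁿ,yⁿ) with xⁿ ∈ S, (F_S∘W)(xⁿ,yⁿ) ≥ (F∘W)(xⁿ,yⁿ). -/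
open scoped BigOperators Classical

noncomputable section
namespace Paper

variable {𝒜 ℬ : Type*} [Fintype 𝒜] [Fintype ℬ] [Nonempty 𝒜] [Nonempty ℬ]
  [DecidableEq 𝒜] [DecidableEq ℬ]

/-- `𝒜_{x^k}`: the letters `x` such that `(x^k, x)` is a prefix of some element of `S`. -/
def prefExt {n : ℕ} (S : Set (Fin n → 𝒜)) (k : Fin n) (xs : Fin k.val → 𝒜) : Set 𝒜 :=
  {x | ∃ z ∈ S, (∀ i : Fin k.val, z ⟨i.val, i.isLt.trans k.isLt⟩ = xs i) ∧ z k = x}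

/-- The modified controller `F_S`: condition `F` on `𝒜_{x^k}` when it has positive mass;
otherwise use the uniform distribution on `𝒜_{x^k}` if it is nonempty; otherwise the point
mass at `a_k` for a fixed `(a₀,…,a_{n−1}) ∈ S`. -/
def modCtrl {n : ℕ} (S : Set (Fin n → 𝒜)) (a : Fin n → 𝒜) (F : Ctrl 𝒜 ℬ n) :
    Ctrl 𝒜 ℬ n := fun k xs ys x =>
  let A : Finset 𝒜 := Finset.univ.filter (fun x' => x' ∈ prefExt S k xs)
  let mass : ℝ := ∑ x' ∈ A, F k xs ys x'
  if 0 < mass then (if x ∈ A then F k xs ys x / mass else 0)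
  else if A.Nonempty then (if x ∈ A then (A.card : ℝ)⁻¹ else 0)
  else if x = a k then 1 else 0

/-! ### Auxiliary lemmas -/

/-- The finset version of `prefExt`. -/
def Afin {n : ℕ} (S : Set (Fin n → 𝒜)) (k : Fin n) (xs : Fin k.val → 𝒜) : Finset 𝒜 :=
  Finset.univ.filter (fun x' => x' ∈ prefExt S k xs)

lemma modCtrl_eq {n : ℕ} (S : Set (Fin n → 𝒜)) (a : Fin n → 𝒜) (F : Ctrl 𝒜 ℬ n)
    (k : Fin n) (xs : Fin k.val → 𝒜) (ys : Fin k.val → ℬ) (x : 𝒜) :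
    modCtrl S a F k xs ys x =
      if 0 < ∑ x' ∈ Afin S k xs, F k xs ys x'
      then (if x ∈ Afin S k xs then F k xs ys x / ∑ x' ∈ Afin S k xs, F k xs ys x' else 0)
      else if (Afin S k xs).Nonempty then (if x ∈ Afin S k xs then ((Afin S k xs).card : ℝ)⁻¹ else 0)
      else if x = a k then 1 else 0 := rfl

lemma modCtrl_nonneg {n : ℕ} (S : Set (Fin n → 𝒜)) (a : Fin n → 𝒜) (F : Ctrl 𝒜 ℬ n)
    (hF : IsController F) (k : Fin n) (xs : Fin k.val → 𝒜) (ys : Fin k.val → ℬ) (x : 𝒜) :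
    0 ≤ modCtrl S a F k xs ys x := by
  rw [modCtrl_eq]
  split_ifs with h1 h2 h3 h4 h5
  · exact div_nonneg ((hF k xs ys).1 x) h1.le
  · exact le_refl 0
  · positivity
  · exact le_refl 0
  · exact zero_le_one
  · exact le_refl 0

lemma modCtrl_isController {n : ℕ} (S : Set (Fin n → 𝒜)) (a : Fin n → 𝒜) (F : Ctrl 𝒜 ℬ n)
    (hF : IsController F) : IsController (modCtrl S a F) := by
  intro k xs ys
  refine ⟨modCtrl_nonneg S a F hF k xs ys, ?_⟩
  simp only [modCtrl_eq]
  split_ifs with h1 h2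
  · rw [Finset.sum_ite_mem, Finset.univ_inter, ← Finset.sum_div, div_self (ne_of_gt h1)]
  · rw [Finset.sum_ite_mem, Finset.univ_inter, Finset.sum_const, nsmul_eq_mul,
      mul_inv_cancel₀]
    exact_mod_cast Finset.card_ne_zero_of_mem h2.choose_spec
  · simp

/-- Support lemma: any letter where the modified controller is nonzero lies in `Afin`,
provided `Afin` is nonempty. -/
lemma mem_of_modCtrl_ne_zero {n : ℕ} (S : Set (Fin n → 𝒜)) (a : Fin n → 𝒜) (F : Ctrl 𝒜 ℬ n)
    (k : Fin n) (xs : Fin k.val → 𝒜) (ys : Fin k.val → ℬ) (x : 𝒜)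
    (hA : (Afin S k xs).Nonempty) (h : modCtrl S a F k xs ys x ≠ 0) :
    x ∈ Afin S k xs := by
  rw [modCtrl_eq] at h
  by_cases h1 : 0 < ∑ x' ∈ Afin S k xs, F k xs ys x'
  · rw [if_pos h1] at h
    by_contra hmem
    rw [if_neg hmem] at h
    exact h rfl
  · rw [if_neg h1, if_pos hA] at h
    by_contra hmem
    rw [if_neg hmem] at h
    exact h rfl

lemma F_le_modCtrl {n : ℕ} (S : Set (Fin n → 𝒜)) (a : Fin n → 𝒜) (F : Ctrl 𝒜 ℬ n)
    (hF : IsController F) (k : Fin n) (xs : Fin k.val → 𝒜) (ys : Fin k.val → ℬ) (x : 𝒜)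
    (hx : x ∈ prefExt S k xs) :
    F k xs ys x ≤ modCtrl S a F k xs ys x := by
  have hxA : x ∈ Afin S k xs := by simp [Afin, hx]
  rw [modCtrl_eq]
  have hM1 : (∑ x' ∈ Afin S k xs, F k xs ys x') ≤ 1 := by
    rw [← (hF k xs ys).2]
    exact Finset.sum_le_sum_of_subset_of_nonneg (Finset.subset_univ _)
      (fun i _ _ => (hF k xs ys).1 i)
  by_cases h1 : 0 < ∑ x' ∈ Afin S k xs, F k xs ys x'
  · rw [if_pos h1, if_pos hxA, le_div_iff₀ h1]
    exact mul_le_of_le_one_right ((hF k xs ys).1 x) hM1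
  · have hx0 : F k xs ys x = 0 := by
      have hle : F k xs ys x ≤ ∑ x' ∈ Afin S k xs, F k xs ys x' :=
        Finset.single_le_sum (fun i _ => (hF k xs ys).1 i) hxA
      exact le_antisymm (hle.trans (not_lt.mp h1)) ((hF k xs ys).1 x)
    rw [if_neg h1, hx0, if_pos ⟨x, hxA⟩, if_pos hxA]
    positivity

/-- Total mass of the law of any controller is 1. -/
lemma ctrlLaw_total {n : ℕ} (W : 𝒜 → ℬ → ℝ) (hW : IsChannel W) :
    ∀ (G : Ctrl 𝒜 ℬ n), IsController G →
      ∑ x : Fin n → 𝒜, ∑ y : Fin n → ℬ, ctrlLaw W G x y = 1 := by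
  induction n with
  | zero =>
      intro G _
      simp [ctrlLaw]
  | succ n ih =>
      intro G hG
      set G' : Ctrl 𝒜 ℬ n := fun k => G k.castSucc with hG'
      have hG'c : IsController G' := fun k xs ys => hG k.castSucc xs ys
      have key : ∀ (x' : Fin n → 𝒜) (xl : 𝒜) (y' : Fin n → ℬ) (yl : ℬ),
          ctrlLaw W G (Fin.snoc x' xl) (Fin.snoc y' yl) =
            ctrlLaw W G' x' y' * (G (Fin.last n) x' y' xl * W xl yl) := by
        intro x' xl y' yl
        have hprex : pre (Fin.snoc x' xl : Fin (n+1) → 𝒜) (Fin.last n) = x' := by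
          funext i; exact @Fin.snoc_castSucc n (fun _ => 𝒜) xl x' i
        have hprey : pre (Fin.snoc y' yl : Fin (n+1) → ℬ) (Fin.last n) = y' := by
          funext i; exact @Fin.snoc_castSucc n (fun _ => ℬ) yl y' i
        have hprex' : ∀ k : Fin n,
            pre (Fin.snoc x' xl : Fin (n+1) → 𝒜) k.castSucc = pre x' k := by
          intro k; funext i
          exact @Fin.snoc_castSucc n (fun _ => 𝒜) xl x' ⟨i.val, i.isLt.trans k.isLt⟩
        have hprey' : ∀ k : Fin n,
            pre (Fin.snoc y' yl : Fin (n+1) → ℬ) k.castSucc = pre y' k := by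
          intro k; funext i
          exact @Fin.snoc_castSucc n (fun _ => ℬ) yl y' ⟨i.val, i.isLt.trans k.isLt⟩
        unfold ctrlLaw
        rw [Fin.prod_univ_castSucc]
        congr 1
        · apply Finset.prod_congr rfl
          intro k _
          rw [hprex' k, hprey' k, Fin.snoc_castSucc, Fin.snoc_castSucc]
        · rw [hprex, hprey, Fin.snoc_last, Fin.snoc_last]
      have ex : ∑ x : Fin (n+1) → 𝒜, ∑ y : Fin (n+1) → ℬ, ctrlLaw W G x y =
          ∑ p : 𝒜 × (Fin n → 𝒜), ∑ q : ℬ × (Fin n → ℬ),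
            ctrlLaw W G (Fin.snoc p.2 p.1) (Fin.snoc q.2 q.1) := by
        rw [← Equiv.sum_comp (Fin.snocEquiv (fun _ => 𝒜))
          (fun x => ∑ y : Fin (n+1) → ℬ, ctrlLaw W G x y)]
        apply Finset.sum_congr rfl
        intro p _
        rw [← Equiv.sum_comp (Fin.snocEquiv (fun _ => ℬ)) (fun y => ctrlLaw W G _ y)]
        rfl
      rw [ex]
      have step1 : ∀ p : 𝒜 × (Fin n → 𝒜),
          (∑ q : ℬ × (Fin n → ℬ), ctrlLaw W G (Fin.snoc p.2 p.1) (Fin.snoc q.2 q.1)) =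
          ∑ y' : Fin n → ℬ, ctrlLaw W G' p.2 y' * G (Fin.last n) p.2 y' p.1 := by
        intro p
        rw [Fintype.sum_prod_type, Finset.sum_comm]
        apply Finset.sum_congr rfl
        intro y' _
        simp only [key]
        rw [← Finset.mul_sum, ← Finset.mul_sum, hW.2 p.1, mul_one]
      simp only [step1]
      rw [Fintype.sum_prod_type, Finset.sum_comm]
      have step2 : ∀ x' : Fin n → 𝒜,
          (∑ xl : 𝒜, ∑ y' : Fin n → ℬ, ctrlLaw W G' x' y' * G (Fin.last n) x' y' xl) =
          ∑ y' : Fin n → ℬ, ctrlLaw W G' x' y' := by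
        intro x'
        rw [Finset.sum_comm]
        apply Finset.sum_congr rfl
        intro y' _
        rw [← Finset.mul_sum, (hG (Fin.last n) x' y').2, mul_one]
      simp only [step2]
      exact ih G' hG'c

/-- If `x ∉ S`, the law of the modified controller vanishes at `x`. -/
lemma ctrlLaw_mod_eq_zero {n : ℕ} (W : 𝒜 → ℬ → ℝ)
    (S : Set (Fin n → 𝒜)) (hS : S.Nonempty) (a : Fin n → 𝒜) (F : Ctrl 𝒜 ℬ n)
    (x : Fin n → 𝒜) (hx : x ∉ S) (y : Fin n → ℬ) :
    ctrlLaw W (modCtrl S a F) x y = 0 := by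
  by_contra h
  have hfac : ∀ k : Fin n,
      modCtrl S a F k (pre x k) (pre y k) (x k) ≠ 0 := by
    intro k
    intro h0
    apply h
    unfold ctrlLaw
    apply Finset.prod_eq_zero (Finset.mem_univ k)
    rw [h0, zero_mul]
  -- inductive claim
  have main : ∀ m : ℕ, m ≤ n → ∃ z ∈ S, ∀ i : Fin n, i.val < m → z i = x i := by
    intro m
    induction m with
    | zero =>
        intro _
        obtain ⟨z, hz⟩ := hS
        exact ⟨z, hz, fun i hi => absurd hi (Nat.not_lt_zero _)⟩
    | succ m ihm =>
        intro hm
        obtain ⟨z, hzS, hzx⟩ := ihm (Nat.le_of_succ_le hm)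
        have hmn : m < n := hm
        set kf : Fin n := ⟨m, hmn⟩ with hkf
        have hzk : z kf ∈ prefExt S kf (pre x kf) := by
          refine ⟨z, hzS, ?_, rfl⟩
          intro i
          exact hzx ⟨i.val, i.isLt.trans hmn⟩ i.isLt
        have hAne : (Afin S kf (pre x kf)).Nonempty :=
          ⟨z kf, by simp [Afin, hzk]⟩
        have hxk : x kf ∈ Afin S kf (pre x kf) :=
          mem_of_modCtrl_ne_zero S a F kf (pre x kf) (pre y kf) (x kf) hAne (hfac kf)
        have hxk' : x kf ∈ prefExt S kf (pre x kf) := by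
          simpa [Afin] using hxk
        obtain ⟨z', hz'S, hz'pre, hz'k⟩ := hxk'
        refine ⟨z', hz'S, ?_⟩
        intro i hi
        rcases Nat.lt_succ_iff_lt_or_eq.mp hi with hlt | heq
        · have := hz'pre ⟨i.val, hlt⟩
          simpa [pre] using this
        · have : i = kf := Fin.ext heq
          rw [this]; exact hz'k
  obtain ⟨z, hzS, hzx⟩ := main n le_rfl
  have : z = x := funext fun i => hzx i i.isLt
  exact hx (this ▸ hzS)

/-- Remarks 1 and 2 of the paper: for any controller `F`, the modified controller `F_S`
(i) puts full mass on `S × ℬⁿ`, and (ii) dominates `F∘W` pointwise on `S × ℬⁿ`. -/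
theorem stmt_16 {n : ℕ} (W : 𝒜 → ℬ → ℝ) (hW : IsChannel W)
    (S : Set (Fin n → 𝒜)) (hS : S.Nonempty)
    (a : Fin n → 𝒜) (ha : a ∈ S)
    (F : Ctrl 𝒜 ℬ n) (hF : IsController F) :
    (∑ x ∈ Finset.univ.filter (fun x : Fin n → 𝒜 => x ∈ S),
        ∑ y : Fin n → ℬ, ctrlLaw W (modCtrl S a F) x y) = 1 ∧
    (∀ x ∈ S, ∀ y : Fin n → ℬ, ctrlLaw W F x y ≤ ctrlLaw W (modCtrl S a F) x y) := by
  constructor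
  · have htot := ctrlLaw_total W hW (modCtrl S a F) (modCtrl_isController S a F hF)
    rw [← htot]
    apply Finset.sum_filter_of_ne
    intro x _ hx0
    by_contra hxS
    apply hx0
    apply Finset.sum_eq_zero
    intro y _
    exact ctrlLaw_mod_eq_zero W S hS a F x hxS y
  · intro x hxS y
    unfold ctrlLaw
    apply Finset.prod_le_prod
    · intro k _
      exact mul_nonneg ((hF k (pre x k) (pre y k)).1 (x k)) (hW.1 (x k) (y k))
    · intro k _
      apply mul_le_mul_of_nonneg_right _ (hW.1 (x k) (y k))
      apply F_le_modCtrl S a F hF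
      exact ⟨x, hxS, fun i => rfl, rfl⟩

end Paper
end
end
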